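/- arXiv:1412.2665 — 8 statements merged into one kernel-verified Lean document; each statement's English description precedes it below -/
import Mathlib

section
/- Let e ≥ 2 be an integer and let u ∈ ℂ⟦X⟧ be a formal power series with nonzero constant coefficient. Set z = X^e · u and let z′ denote the formal derivative of z. Then there exists g ∈ ℂ⟦X⟧ such that z·(z − 1)·g = (z′)², and the order of g equals e − 2. -/
open PowerSeries

/-- For `z = X^e · u` with `u(0) ≠ 0` and `e ≥ 2`, the pullback
`(dz/z) ⊗ (dz/(z-1))`, i.e. the series `g` with `z(z-1)g = (z')²`,
exists and has order exactly `e - 2`. -/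
theorem pullback_two_tensor_order (e : ℕ) (he : 2 ≤ e) (u : PowerSeries ℂ)
    (hu : PowerSeries.constantCoeff u ≠ 0) :
    ∃ g : PowerSeries ℂ,
      (PowerSeries.X ^ e * u) * ((PowerSeries.X ^ e * u) - 1) * g =
        (PowerSeries.derivative ℂ (PowerSeries.X ^ e * u)) ^ 2 ∧
      g.order = (e - 2 : ℕ) := by
  set v : PowerSeries ℂ := (e : PowerSeries ℂ) * u + X * derivative ℂ u with hv
  set w : PowerSeries ℂ := u * (X ^ e * u - 1) with hw
  have hcw : constantCoeff w ≠ 0 := by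
    have : constantCoeff w = constantCoeff u * (0 - 1) := by
      simp [hw, map_pow, constantCoeff_X, zero_pow (by omega : e ≠ 0)]
    rw [this]
    simpa using hu
  have hcv : constantCoeff v ≠ 0 := by
    have : constantCoeff v = (e : ℂ) * constantCoeff u := by
      simp [hv, constantCoeff_X]
    rw [this]
    exact mul_ne_zero (Nat.cast_ne_zero.mpr (by omega)) hu
  have hder : derivative ℂ (X ^ e * u) = X ^ (e - 1) * v := by
    rw [Derivation.leibniz, Derivation.leibniz_pow]
    simp only [smul_eq_mul, derivative_X, hv]
    ring_nf
    rw [show (X:PowerSeries ℂ) * X ^ (e - 1) = X ^ e by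
      rw [← pow_succ']; congr 1; omega]
  refine ⟨X ^ (e - 2) * (v ^ 2 * w⁻¹), ?_, ?_⟩
  · rw [hder]
    have hwinv : w * w⁻¹ = 1 := PowerSeries.mul_inv_cancel _ hcw
    calc X ^ e * u * (X ^ e * u - 1) * (X ^ (e - 2) * (v ^ 2 * w⁻¹))
        = X ^ e * X ^ (e - 2) * v ^ 2 * (w * w⁻¹) := by rw [hw]; ring
      _ = X ^ (e - 1) * X ^ (e - 1) * v ^ 2 := by
          rw [hwinv, ← pow_add, ← pow_add, show e + (e - 2) = e - 1 + (e - 1) by omega]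
          ring
      _ = (X ^ (e - 1) * v) ^ 2 := by ring
  · rw [order_mul, order_X_pow]
    have h0 : (v ^ 2 * w⁻¹).order = 0 := by
      rw [← Nat.cast_zero, order_eq_nat]
      constructor
      · rw [coeff_zero_eq_constantCoeff]
        simp only [map_mul, map_pow]
        refine mul_ne_zero (pow_ne_zero _ hcv) ?_
        rw [PowerSeries.constantCoeff_inv]
        exact inv_ne_zero hcw
      · intro i hi; omega
    rw [h0, add_zero]
end

section
/- Let e ≥ 2 be an integer, let u ∈ ℂ⟦X⟧ have nonzero constant coefficient, and let c ∈ ℂ with c ≠ 0. Set z = X^e · u and let z′ be its formal derivative. Then there exists g ∈ ℂ⟦X⟧ such that z·(z − 1)·(z − c)·g = (z′)², and the order of g equals e − 2. -/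
open PowerSeries

/-- For `z = X^e · u` with `u(0) ≠ 0`, `e ≥ 2`, and `c ≠ 0`, the series `g` with
`z(z-1)(z-c)g = (z′)²` exists and has order exactly `e - 2`: the pullback of
`(dz/z) ⊗ (dz/((z-1)(z-c)))` is regular and nonzero along the fiber over `z = 0`. -/
theorem pullback_two_tensor_three_poles_order (e : ℕ) (he : 2 ≤ e) (u : PowerSeries ℂ)
    (hu : PowerSeries.constantCoeff u ≠ 0) (c : ℂ) (hc : c ≠ 0) :
    ∃ g : PowerSeries ℂ,
      (PowerSeries.X ^ e * u) * ((PowerSeries.X ^ e * u) - 1) *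
          ((PowerSeries.X ^ e * u) - PowerSeries.C c) * g =
        (PowerSeries.derivative ℂ (PowerSeries.X ^ e * u)) ^ 2 ∧
      g.order = (e - 2 : ℕ) := by
  set z : PowerSeries ℂ := PowerSeries.X ^ e * u with hz
  set w : PowerSeries ℂ := (e : PowerSeries ℂ) * u + PowerSeries.X * PowerSeries.derivative ℂ u
    with hw
  have hwc : PowerSeries.constantCoeff w ≠ 0 := by
    have : PowerSeries.constantCoeff w = (e : ℂ) * PowerSeries.constantCoeff u := by
      simp [hw]
    rw [this]
    exact mul_ne_zero (Nat.cast_ne_zero.mpr (by omega)) hu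
  have hderiv : PowerSeries.derivative ℂ z = PowerSeries.X ^ (e - 1) * w := by
    rw [hz, Derivation.leibniz, Derivation.leibniz_pow]
    simp only [PowerSeries.derivative_X, smul_eq_mul, mul_one, hw]
    ring_nf
    rw [show (PowerSeries.X : PowerSeries ℂ) * PowerSeries.X ^ (e - 1) = PowerSeries.X ^ e from by
      rw [← pow_succ']; congr 1; omega]
  set A : PowerSeries ℂ := u * (z - 1) * (z - PowerSeries.C c) with hA
  have hAu : IsUnit A := by
    rw [PowerSeries.isUnit_iff_constantCoeff]
    have hzc : PowerSeries.constantCoeff z = 0 := by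
      simp [hz, PowerSeries.constantCoeff_X, zero_pow (by omega : e ≠ 0)]
    simp [hA, hzc, hu, hc]
  obtain ⟨B, hB⟩ : ∃ B, A * B = 1 := by
    obtain ⟨v, hv⟩ := hAu
    exact ⟨(v⁻¹ : _), by rw [← hv]; exact v.mul_inv⟩
  have hBu : IsUnit B := IsUnit.of_mul_eq_one _ (by rw [mul_comm]; exact hB)
  refine ⟨PowerSeries.X ^ (e - 2) * w ^ 2 * B, ?_, ?_⟩
  · rw [hderiv]
    calc z * (z - 1) * (z - PowerSeries.C c) * (PowerSeries.X ^ (e - 2) * w ^ 2 * B)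
        = PowerSeries.X ^ e * PowerSeries.X ^ (e - 2) * w ^ 2 * (A * B) := by
          rw [hz, hA]; ring
      _ = PowerSeries.X ^ (e - 1) * PowerSeries.X ^ (e - 1) * w ^ 2 := by
          rw [hB, mul_one, ← pow_add, ← pow_add]
          congr 2
          omega
      _ = (PowerSeries.X ^ (e - 1) * w) ^ 2 := by ring
  · have hwu : IsUnit w := PowerSeries.isUnit_iff_constantCoeff.mpr hwc.isUnit
    rw [PowerSeries.order_mul, PowerSeries.order_mul, PowerSeries.order_X_pow,
      PowerSeries.order_zero_of_unit hBu, sq, PowerSeries.order_mul,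
      PowerSeries.order_zero_of_unit hwu]
    simp
end

section
/- Let e ≥ 3 be an integer and let u ∈ ℂ⟦X⟧ have nonzero constant coefficient. Set z = X^e · u and let z′ be its formal derivative. Then there exists g ∈ ℂ⟦X⟧ such that z²·(z − 1)²·g = (z′)³, and the order of g equals e − 3. -/
open PowerSeries

/-- For `z = X^e · u` with `u(0) ≠ 0` and `e ≥ 3`, the series `g` with
`z²(z-1)²g = (z′)³` exists and has order exactly `e - 3`: the pullback of the
3-tensor `(dz/z) ⊗ (dz/(z-1)) ⊗ (dz/(z(z-1)))` is regular and nonzero. -/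
theorem pullback_three_tensor_order (e : ℕ) (he : 3 ≤ e) (u : PowerSeries ℂ)
    (hu : PowerSeries.constantCoeff u ≠ 0) :
    ∃ g : PowerSeries ℂ,
      (PowerSeries.X ^ e * u) ^ 2 * ((PowerSeries.X ^ e * u) - 1) ^ 2 * g =
        (PowerSeries.derivative ℂ (PowerSeries.X ^ e * u)) ^ 3 ∧
      g.order = (e - 3 : ℕ) := by
  obtain ⟨m, rfl⟩ : ∃ m, e = m + 3 := ⟨e - 3, by omega⟩
  set w : PowerSeries ℂ := ((m + 3 : ℕ) : ℂ⟦X⟧) * u + X * derivative ℂ u with hw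
  set h : PowerSeries ℂ := u ^ 2 * (X ^ (m + 3) * u - 1) ^ 2 with hh
  have hXe0 : constantCoeff ((X : ℂ⟦X⟧) ^ (m + 3)) = 0 := by
    simp [pow_succ]
  have hh0 : constantCoeff h ≠ 0 := by
    have : constantCoeff h =
        (constantCoeff u) ^ 2 * (constantCoeff ((X:ℂ⟦X⟧) ^ (m+3)) * constantCoeff u - 1) ^ 2 := by
      simp [hh]
    rw [this, hXe0]
    simpa using pow_ne_zero 2 hu
  have hw0 : constantCoeff w ≠ 0 := by
    have : constantCoeff w = ((m + 3 : ℕ) : ℂ) * constantCoeff u := by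
      simp [hw, map_natCast, map_ofNat]
    rw [this]
    exact mul_ne_zero (Nat.cast_ne_zero.2 (by omega)) hu
  have hderiv : derivative ℂ ((X : ℂ⟦X⟧) ^ (m + 3) * u) = X ^ (m + 2) * w := by
    have h1 : derivative ℂ ((X : ℂ⟦X⟧) ^ (m + 3)) = ((m + 3 : ℕ) : ℂ⟦X⟧) * X ^ (m + 2) := by
      have := Derivation.leibniz_pow (derivative ℂ) (X : ℂ⟦X⟧) (m + 3)
      simp only [smul_eq_mul, Nat.add_sub_cancel, derivative_X, mul_one] at this; simpa using this
    rw [Derivation.leibniz, smul_eq_mul, smul_eq_mul, h1, hw]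
    ring
  refine ⟨X ^ m * (w ^ 3 * h⁻¹), ?_, ?_⟩
  · have hinv : h * h⁻¹ = 1 := PowerSeries.mul_inv_cancel h hh0
    rw [hderiv]
    calc (X ^ (m+3) * u) ^ 2 * (X ^ (m+3) * u - 1) ^ 2 * (X ^ m * (w ^ 3 * h⁻¹))
        = (X : ℂ⟦X⟧) ^ (3*m + 6) * w ^ 3 * (h * h⁻¹) := by rw [hh]; ring
      _ = (X ^ (m + 2) * w) ^ 3 := by rw [hinv]; ring
  · have hk : (w ^ 3 * h⁻¹).order = 0 := by
      rw [← Nat.cast_zero, PowerSeries.order_eq_nat]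
      constructor
      · simp only [Nat.cast_zero, coeff_zero_eq_constantCoeff, map_mul, map_pow,
          PowerSeries.constantCoeff_inv]
        exact mul_ne_zero (pow_ne_zero 3 hw0) (inv_ne_zero hh0)
      · intro i hi; exact absurd hi (by omega)
    rw [PowerSeries.order_mul, PowerSeries.order_X_pow, hk]
    simp
end

section
/- Let e ≥ 2 be an integer and let u ∈ ℂ⟦X⟧ have nonzero constant coefficient. Set z = X^e · u and let z′ be its formal derivative. Then there exists g ∈ ℂ⟦X⟧ such that z²·(z − 1)³·g = (z′)⁴, and the order of g equals 2e − 4. -/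
open PowerSeries

/-- For `z = X^e · u` with `u(0) ≠ 0` and `e ≥ 2`, the series `g` with
`z²(z-1)³g = (z′)⁴` exists and has order exactly `2e - 4`: the pullback of the
4-tensor `(dz/z) ⊗ (dz/(z-1))^⊗2 ⊗ (dz/(z(z-1)))` over `z = 0` is regular and nonzero. -/
theorem pullback_four_tensor_order_at_zero (e : ℕ) (he : 2 ≤ e) (u : PowerSeries ℂ)
    (hu : PowerSeries.constantCoeff u ≠ 0) :
    ∃ g : PowerSeries ℂ,
      (PowerSeries.X ^ e * u) ^ 2 * ((PowerSeries.X ^ e * u) - 1) ^ 3 * g =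
        (PowerSeries.derivative ℂ (PowerSeries.X ^ e * u)) ^ 4 ∧
      g.order = (2 * e - 4 : ℕ) := by
  set v : PowerSeries ℂ := PowerSeries.C (e : ℂ) * u + PowerSeries.X * PowerSeries.derivative ℂ u with hv
  set w : PowerSeries ℂ := PowerSeries.X ^ e * u - 1 with hw
  have he0 : (e : ℂ) ≠ 0 := Nat.cast_ne_zero.mpr (by omega)
  -- constant coefficients
  have hcw : PowerSeries.constantCoeff w = -1 := by
    have : PowerSeries.constantCoeff (PowerSeries.X ^ e : PowerSeries ℂ) = 0 := by
      rw [map_pow, PowerSeries.constantCoeff_X, zero_pow (by omega)]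
    simp [hw, this]
  have hcv : PowerSeries.constantCoeff v = (e : ℂ) * PowerSeries.constantCoeff u := by
    simp [hv]
  have hcd : PowerSeries.constantCoeff (u ^ 2 * w ^ 3) ≠ 0 := by
    rw [map_mul, map_pow, map_pow, hcw]
    intro h
    have := mul_ne_zero (pow_ne_zero 2 hu) (pow_ne_zero 3 (by norm_num : (-1 : ℂ) ≠ 0))
    exact this h
  -- derivative of z
  have hderiv : PowerSeries.derivative ℂ (PowerSeries.X ^ e * u) =
      PowerSeries.X ^ (e - 1) * v := by
    have h1 : PowerSeries.derivative ℂ ((PowerSeries.X : PowerSeries ℂ) ^ e) =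
        PowerSeries.C (e : ℂ) * PowerSeries.X ^ (e - 1) := by
      rw [Derivation.leibniz_pow, PowerSeries.derivative_X, smul_eq_mul, mul_one,
        nsmul_eq_mul, map_natCast (PowerSeries.C (R := ℂ)) e]
    have hXe : (PowerSeries.X : PowerSeries ℂ) ^ e = PowerSeries.X ^ (e - 1) * PowerSeries.X := by
      rw [← pow_succ]; congr 1; omega
    rw [Derivation.leibniz, h1, hv, smul_eq_mul, smul_eq_mul, hXe]
    ring
  refine ⟨PowerSeries.X ^ (2 * e - 4) * (v ^ 4 * (u ^ 2 * w ^ 3)⁻¹), ?_, ?_⟩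
  · rw [hderiv]
    have hinv : (u ^ 2 * w ^ 3) * (u ^ 2 * w ^ 3)⁻¹ = 1 :=
      PowerSeries.mul_inv_cancel _ hcd
    have hXpow : ((PowerSeries.X : PowerSeries ℂ) ^ e) ^ 2 * PowerSeries.X ^ (2 * e - 4)
        = (PowerSeries.X ^ (e - 1)) ^ 4 := by
      rw [← pow_mul, ← pow_mul, ← pow_add]
      congr 1
      omega
    calc (PowerSeries.X ^ e * u) ^ 2 * w ^ 3 *
          (PowerSeries.X ^ (2 * e - 4) * (v ^ 4 * (u ^ 2 * w ^ 3)⁻¹))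
        = (((PowerSeries.X : PowerSeries ℂ) ^ e) ^ 2 * PowerSeries.X ^ (2 * e - 4)) * v ^ 4 *
            ((u ^ 2 * w ^ 3) * (u ^ 2 * w ^ 3)⁻¹) := by ring
      _ = (PowerSeries.X ^ (e - 1)) ^ 4 * v ^ 4 * 1 := by rw [hXpow, hinv]
      _ = (PowerSeries.X ^ (e - 1) * v) ^ 4 := by ring
  · have hch : PowerSeries.constantCoeff (v ^ 4 * (u ^ 2 * w ^ 3)⁻¹) ≠ 0 := by
      rw [map_mul, map_pow, hcv, PowerSeries.constantCoeff_inv]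
      exact mul_ne_zero (pow_ne_zero 4 (mul_ne_zero he0 hu)) (inv_ne_zero hcd)
    have horder : (v ^ 4 * (u ^ 2 * w ^ 3)⁻¹).order = ((0 : ℕ) : ℕ∞) :=
      PowerSeries.order_eq_nat.mpr
        ⟨by simpa using hch, fun i hi => absurd hi (Nat.not_lt_zero i)⟩
    rw [PowerSeries.order_mul, PowerSeries.order_X_pow, horder, Nat.cast_zero, add_zero]
end

section
/- Let e ≥ 4 be an integer and let u ∈ ℂ⟦X⟧ have nonzero constant coefficient. Set z = 1 + X^e · u and let z′ be its formal derivative. Then there exists g ∈ ℂ⟦X⟧ such that z²·(z − 1)³·g = (z′)⁴, and the order of g equals e − 4. -/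
open PowerSeries

private lemma order_eq_zero_of_cc {φ : PowerSeries ℂ} (h : PowerSeries.constantCoeff φ ≠ 0) :
    φ.order = 0 := by
  have : φ.order = ((0 : ℕ) : ℕ∞) := by
    rw [PowerSeries.order_eq_nat]
    exact ⟨by simpa using h, by omega⟩
  simpa using this

/-- For `z = 1 + X^e · u` with `u(0) ≠ 0` and `e ≥ 4`, the series `g` with
`z²(z-1)³g = (z′)⁴` exists and has order exactly `e - 4`: the pullback of the
4-tensor `(dz/z) ⊗ (dz/(z-1))^⊗2 ⊗ (dz/(z(z-1)))` over `z = 1` is regular and nonzero. -/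
theorem pullback_four_tensor_order_at_one (e : ℕ) (he : 4 ≤ e) (u : PowerSeries ℂ)
    (hu : PowerSeries.constantCoeff u ≠ 0) :
    ∃ g : PowerSeries ℂ,
      (1 + PowerSeries.X ^ e * u) ^ 2 * ((1 + PowerSeries.X ^ e * u) - 1) ^ 3 * g =
        (PowerSeries.derivative ℂ (1 + PowerSeries.X ^ e * u)) ^ 4 ∧
      g.order = (e - 4 : ℕ) := by
  set z : PowerSeries ℂ := 1 + X ^ e * u with hz
  set w : PowerSeries ℂ := (C (e : ℂ)) * u + X * derivative ℂ u with hw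
  have he0 : e ≠ 0 := by omega
  have hXe : constantCoeff ((X : PowerSeries ℂ) ^ e * u) = 0 := by
    simp [he0]
  have hz0 : constantCoeff z = 1 := by
    simp [hz, hXe]
  have hw0 : constantCoeff w ≠ 0 := by
    simpa [hw] using ⟨he0, hu⟩
  have hh0 : constantCoeff (z ^ 2 * u ^ 3) ≠ 0 := by
    simp [hz0, hu]
  have hd : derivative ℂ z = X ^ (e - 1) * w := by
    have hX : (X : PowerSeries ℂ) ^ e = X ^ (e - 1) * X := by
      rw [← pow_succ]; congr 1; omega
    rw [hz, hw, map_add, Derivation.leibniz, Derivation.leibniz_pow]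
    simp only [Derivation.map_one_eq_zero, derivative_X, smul_eq_mul, nsmul_eq_mul, mul_one,
      zero_add]
    rw [hX]
    have hc : ((e : ℂ⟦X⟧)) = C (e : ℂ) := rfl
    rw [hc]
    ring
  refine ⟨X ^ (e - 4) * w ^ 4 * (z ^ 2 * u ^ 3)⁻¹, ?_, ?_⟩
  · have hzz : z - 1 = X ^ e * u := by rw [hz]; ring
    rw [hzz, hd]
    have hpow : (X : PowerSeries ℂ) ^ e * ((X : PowerSeries ℂ) ^ e) ^ 2 * X ^ (e - 4)
        = (X ^ (e - 1)) ^ 4 := by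
      rw [← pow_mul, ← pow_add, ← pow_add, ← pow_mul]
      congr 1; omega
    calc z ^ 2 * (X ^ e * u) ^ 3 * (X ^ (e - 4) * w ^ 4 * (z ^ 2 * u ^ 3)⁻¹)
        = (X ^ e * (X ^ e) ^ 2 * X ^ (e - 4)) * w ^ 4 * ((z ^ 2 * u ^ 3) * (z ^ 2 * u ^ 3)⁻¹) := by
          ring
      _ = (X ^ (e - 1) * w) ^ 4 := by
          rw [hpow, PowerSeries.mul_inv_cancel _ hh0]; ring
  · rw [order_mul, order_mul, order_X_pow]
    have h1 : (w ^ 4).order = 0 := order_eq_zero_of_cc (by simpa using pow_ne_zero 4 hw0)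
    have h2 : ((z ^ 2 * u ^ 3)⁻¹).order = 0 := by
      apply order_eq_zero_of_cc
      rw [PowerSeries.constantCoeff_inv]
      exact inv_ne_zero hh0
    rw [h1, h2, add_zero, add_zero]
end

section
/- Let e ≥ 2 be an integer and let u ∈ ℂ⟦X⟧ have nonzero constant coefficient. Set z = X^e · u and let z′ be its formal derivative. Then there exists g ∈ ℂ⟦X⟧ such that z³·(z − 1)⁴·g = (z′)⁶, and the order of g equals 3e − 6. -/
open PowerSeries

/-- For `z = X^e · u` with `u(0) ≠ 0` and `e ≥ 2`, the series `g` with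
`z³(z-1)⁴g = (z′)⁶` exists and has order exactly `3e - 6`: the degree-6 symmetric
log tensor with pole orders `3, 4, 5` at `0, 1, ∞` pulls back regularly and
nontrivially along a multiplicity-`e` fiber component over `z = 0`. -/
theorem pullback_six_tensor_order_at_zero (e : ℕ) (he : 2 ≤ e) (u : PowerSeries ℂ)
    (hu : PowerSeries.constantCoeff (R := ℂ) u ≠ 0) :
    ∃ g : PowerSeries ℂ,
      (PowerSeries.X ^ e * u) ^ 3 * ((PowerSeries.X ^ e * u) - 1) ^ 4 * g =
        (PowerSeries.derivative ℂ (PowerSeries.X ^ e * u)) ^ 6 ∧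
      g.order = (3 * e - 6 : ℕ) := by
  obtain ⟨k, rfl⟩ : ∃ k, e = k + 2 := ⟨e - 2, by omega⟩
  set c : PowerSeries ℂ := ((k + 2 : ℕ) : PowerSeries ℂ) * u + X * derivative ℂ u with hc
  have hd : derivative ℂ (X ^ (k + 2) * u) = X ^ (k + 1) * c := by
    rw [Derivation.leibniz, Derivation.leibniz_pow]
    simp only [hc, smul_eq_mul, smul_smul, derivative_X, mul_one, nsmul_eq_mul]
    rw [pow_succ]
    push_cast
    ring
  set B : PowerSeries ℂ := u ^ 3 * (X ^ (k + 2) * u - 1) ^ 4 with hB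
  have hB0 : constantCoeff B ≠ 0 := by
    simp [hB, map_pow, map_mul, map_sub]
    exact hu
  set h : PowerSeries ℂ := c ^ 6 * B⁻¹ with hh
  refine ⟨X ^ (3 * (k + 2) - 6) * h, ?_, ?_⟩
  · have h36 : 3 * (k + 2) - 6 = 3 * k := by omega
    rw [h36, hd, hh]
    have : (X ^ (k + 2) * u : PowerSeries ℂ) ^ 3 * (X ^ (k + 2) * u - 1) ^ 4 *
        (X ^ (3 * k) * (c ^ 6 * B⁻¹)) = (X ^ (k + 1)) ^ 6 * c ^ 6 * (B * B⁻¹) := by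
      rw [hB]; ring
    rw [this, PowerSeries.mul_inv_cancel _ hB0, mul_one, mul_pow]
  · have hc0 : constantCoeff c ≠ 0 := by
      have hcc : constantCoeff c = ((k + 2 : ℕ) : ℂ) * constantCoeff u := by
        rw [hc, map_add, map_mul, map_mul, map_natCast, constantCoeff_X,
          zero_mul, add_zero]
      rw [hcc]
      exact mul_ne_zero (Nat.cast_ne_zero.mpr (by omega)) hu
    have hh0 : constantCoeff h ≠ 0 := by
      rw [hh, map_mul, map_pow, constantCoeff_inv]
      exact mul_ne_zero (pow_ne_zero _ hc0) (inv_ne_zero hB0)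
    have horder : h.order = 0 := by
      rw [← Nat.cast_zero, order_eq_nat]
      exact ⟨by simpa using hh0, by omega⟩
    rw [order_mul, order_X_pow, horder, add_zero]
end

section
/- Let e ≥ 3 be an integer and let u ∈ ℂ⟦X⟧ have nonzero constant coefficient. Set z = 1 + X^e · u and let z′ be its formal derivative. Then there exists g ∈ ℂ⟦X⟧ such that z³·(z − 1)⁴·g = (z′)⁶, and the order of g equals 2e − 6. -/
open PowerSeries

/-- For `z = 1 + X^e · u` with `u(0) ≠ 0` and `e ≥ 3`, the series `g` with
`z³(z-1)⁴g = (z′)⁶` exists and has order exactly `2e - 6`: the degree-6 symmetric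
log tensor with pole orders `3, 4, 5` at `0, 1, ∞` pulls back regularly and
nontrivially along a multiplicity-`e` fiber component over `z = 1`. -/
theorem pullback_six_tensor_order_at_one (e : ℕ) (he : 3 ≤ e) (u : PowerSeries ℂ)
    (hu : PowerSeries.constantCoeff u ≠ 0) :
    ∃ g : PowerSeries ℂ,
      (1 + PowerSeries.X ^ e * u) ^ 3 * ((1 + PowerSeries.X ^ e * u) - 1) ^ 4 * g =
        (PowerSeries.derivative ℂ (1 + PowerSeries.X ^ e * u)) ^ 6 ∧
      g.order = (2 * e - 6 : ℕ) := by
  set z : PowerSeries ℂ := 1 + X ^ e * u with hz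
  set w : PowerSeries ℂ := C (e : ℂ) * u + X * derivative ℂ u with hw
  have he1 : 1 ≤ e := le_trans (by norm_num) he
  have hderiv : derivative ℂ z = X ^ (e - 1) * w := by
    have hXe : (X : PowerSeries ℂ) ^ e = X ^ (e - 1) * X := by
      rw [← pow_succ, Nat.sub_add_cancel he1]
    have hdX : derivative ℂ ((X : PowerSeries ℂ) ^ e) = C (e : ℂ) * X ^ (e - 1) := by
      rw [Derivation.leibniz_pow]
      simp [nsmul_eq_mul]
    rw [hz, map_add, Derivation.map_one_eq_zero, zero_add, Derivation.leibniz, hdX, hw, hXe,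
      smul_eq_mul, smul_eq_mul]
    ring
  have hz0 : constantCoeff z = 1 := by
    rw [hz]
    simp [map_pow, constantCoeff_X, zero_pow (by omega : e ≠ 0)]
  set h : PowerSeries ℂ := u ^ 4 * z ^ 3 with hh
  have hh0 : constantCoeff h ≠ 0 := by
    rw [hh]; simp [hz0, hu]
  have hw0 : constantCoeff w ≠ 0 := by
    rw [hw]
    simp only [map_add, map_mul, constantCoeff_C, constantCoeff_X, zero_mul, add_zero]
    exact mul_ne_zero (Nat.cast_ne_zero.mpr (by omega)) hu
  refine ⟨X ^ (2 * e - 6) * (w ^ 6 * h⁻¹), ?_, ?_⟩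
  · have hinv : h * h⁻¹ = 1 := PowerSeries.mul_inv_cancel h hh0
    have hzm1 : z - 1 = X ^ e * u := by rw [hz]; ring
    rw [hzm1, hderiv, mul_pow, mul_pow, ← pow_mul, ← pow_mul]
    have hpow : (X : PowerSeries ℂ) ^ (e * 4) * X ^ (2 * e - 6) = X ^ ((e - 1) * 6) := by
      rw [← pow_add]
      congr 1
      omega
    calc z ^ 3 * (X ^ (e * 4) * u ^ 4) * (X ^ (2 * e - 6) * (w ^ 6 * h⁻¹))
        = (X ^ (e * 4) * X ^ (2 * e - 6)) * w ^ 6 * (u ^ 4 * z ^ 3 * h⁻¹) := by ring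
      _ = X ^ ((e - 1) * 6) * w ^ 6 := by rw [hpow, ← hh, hinv, mul_one]
  · rw [order_mul, order_X_pow, order_mul]
    have h1 : (w ^ 6).order = ((0 : ℕ) : ℕ∞) := by
      rw [order_eq_nat]
      constructor
      · simpa [coeff_zero_eq_constantCoeff, map_pow] using pow_ne_zero 6 hw0
      · intro i hi; omega
    have h2 : (h⁻¹).order = ((0 : ℕ) : ℕ∞) := by
      rw [order_eq_nat]
      constructor
      · rw [coeff_zero_eq_constantCoeff, PowerSeries.constantCoeff_inv]
        exact inv_ne_zero hh0
      · intro i hi; omega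
    rw [h1, h2]
    simp
end

section
/- Let e ≥ 6 be an integer and let u ∈ ℂ⟦X⟧ have nonzero constant coefficient. Set w = X^e · u and let w′ be its formal derivative. Then there exists g ∈ ℂ⟦X⟧ such that w⁵·(1 − w)⁴·g = (w′)⁶, and the order of g equals e − 6. -/
open PowerSeries

/-- For `w = X^e · u` with `u(0) ≠ 0` and `e ≥ 6`, the series `g` with
`w⁵(1-w)⁴g = (w′)⁶` exists and has order exactly `e - 6`: the degree-6 symmetric
log tensor with pole orders `3, 4, 5` at `0, 1, ∞` pulls back regularly and
nontrivially along a multiplicity-`e` fiber component over `z = ∞`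
(in the coordinate `w = 1/z` at infinity). -/
theorem pullback_six_tensor_order_at_infinity (e : ℕ) (he : 6 ≤ e) (u : PowerSeries ℂ)
    (hu : PowerSeries.constantCoeff (R := ℂ) u ≠ 0) :
    ∃ g : PowerSeries ℂ,
      (PowerSeries.X ^ e * u) ^ 5 * (1 - PowerSeries.X ^ e * u) ^ 4 * g =
        (PowerSeries.derivative ℂ (PowerSeries.X ^ e * u)) ^ 6 ∧
      g.order = (e - 6 : ℕ) := by
  set v : PowerSeries ℂ := (e : PowerSeries ℂ) * u + X * derivative ℂ u with hv
  set h : PowerSeries ℂ := u ^ 5 * (1 - X ^ e * u) ^ 4 with hh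
  have hX : (X : PowerSeries ℂ) ^ e = X ^ (e - 1) * X := by
    rw [← pow_succ]; congr 1; omega
  have hderiv : derivative ℂ (X ^ e * u) = X ^ (e - 1) * v := by
    rw [Derivation.leibniz, Derivation.leibniz_pow, derivative_X]
    simp only [smul_eq_mul, nsmul_eq_mul, mul_one, hv]
    rw [hX]; ring
  have hhc : constantCoeff (R := ℂ) h ≠ 0 := by
    have : constantCoeff (R := ℂ) h = (constantCoeff (R := ℂ) u) ^ 5 *
        (1 - (constantCoeff (R := ℂ) X) ^ e * constantCoeff (R := ℂ) u) ^ 4 := by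
      simp [hh]
    rw [this]
    have he0 : (constantCoeff (R := ℂ) (X : PowerSeries ℂ)) = 0 := by simp
    rw [he0, zero_pow (by omega), zero_mul, sub_zero, one_pow, mul_one]
    exact pow_ne_zero _ hu
  refine ⟨X ^ (e - 6) * (v ^ 6 * h⁻¹), ?_, ?_⟩
  · rw [hderiv]
    have : (X ^ e * u) ^ 5 * (1 - X ^ e * u) ^ 4 * (X ^ (e - 6) * (v ^ 6 * h⁻¹)) =
        X ^ (5 * e + (e - 6)) * v ^ 6 * (h * h⁻¹) := by
      rw [hh, pow_add]; ring
    rw [this, PowerSeries.mul_inv_cancel h hhc, mul_one, mul_pow, ← pow_mul]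
    congr 2
    omega
  · rw [order_mul, order_X_pow]
    have hvh : constantCoeff (R := ℂ) (v ^ 6 * h⁻¹) ≠ 0 := by
      rw [map_mul, map_pow, constantCoeff_inv]
      refine mul_ne_zero (pow_ne_zero _ ?_) (inv_ne_zero hhc)
      simp only [hv, map_add, map_mul, map_natCast, constantCoeff_X, zero_mul, add_zero]
      exact mul_ne_zero (Nat.cast_ne_zero.mpr (by omega)) hu
    have : (v ^ 6 * h⁻¹).order = 0 := by
      rw [← Nat.cast_zero, order_eq_nat]
      exact ⟨by simpa using hvh, fun i hi => absurd hi (by omega)⟩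
    rw [this, add_zero]
end
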